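/- arXiv:2103.07651 — 3 statements merged into one kernel-verified Lean document; each statement's English description precedes it below -/
import Mathlib

section
/- Let α₋₁, α₀, α₁, α₂, σ > 0, ρ, θ > 1 with 1 + ρ > 2θ, and β ∈ (0,1). Define V(x) = α₋₁β x^{β−2} − α₀β x^{β−1} + α₁β x^{β} − α₂β x^{ρ+β−1} − α₋₁β x^{−2} + α₀β x^{−1} − α₁β + α₂β x^{ρ−1} + (σ²/2)β(β−1) x^{β+2θ−2} + (σ²/2)β x^{2θ−2} + λ((1+α₃)^β − 1)x^β for constants λ, α₃ > 0. Then there exists a constant K such that V(x) ≤ K for all x > 0. -/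
/-- On (0,1], a power with exponent `q ≤ 0` is dominated by any positive multiple
of a power with smaller exponent, up to an additive constant. -/
lemma aux_small (A B p q : ℝ) (hA : 0 < A) (hB : 0 < B) (hq : q ≤ 0) (hpq : p < q) :
    ∃ K : ℝ, 0 ≤ K ∧ ∀ x : ℝ, 0 < x → x ≤ 1 → A * x ^ q ≤ B * x ^ p + K := by
  have hBA : 0 < B / A := div_pos hB hA
  set c : ℝ := min 1 ((B / A) ^ ((q - p)⁻¹)) with hc
  have hcpos : 0 < c := lt_min one_pos (Real.rpow_pos_of_pos hBA _)
  refine ⟨A * c ^ q, by positivity, fun x hx hx1 => ?_⟩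
  rcases le_total x c with h | h
  · have h1 : x ^ (q - p) ≤ c ^ (q - p) :=
      Real.rpow_le_rpow hx.le h (by linarith)
    have h2 : c ^ (q - p) ≤ B / A := by
      calc c ^ (q - p) ≤ ((B / A) ^ ((q - p)⁻¹)) ^ (q - p) :=
            Real.rpow_le_rpow hcpos.le (min_le_right _ _) (by linarith)
        _ = B / A := by
            rw [← Real.rpow_mul hBA.le, inv_mul_cancel₀ (by linarith : q - p ≠ 0),
              Real.rpow_one]
    have h3 : A * x ^ (q - p) ≤ B := by
      have := h1.trans h2
      rw [div_eq_mul_inv] at this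
      have := mul_le_mul_of_nonneg_left this hA.le
      calc A * x ^ (q - p) ≤ A * (B * A⁻¹) := this
        _ = B := by field_simp
    have h4 : x ^ q = x ^ (q - p) * x ^ p := by
      rw [← Real.rpow_add hx]; ring_nf
    have h5 : (0:ℝ) ≤ x ^ p := (Real.rpow_pos_of_pos hx p).le
    calc A * x ^ q = (A * x ^ (q - p)) * x ^ p := by rw [h4]; ring
      _ ≤ B * x ^ p := mul_le_mul_of_nonneg_right h3 h5
      _ ≤ B * x ^ p + A * c ^ q := le_add_of_nonneg_right (by positivity)
  · have h1 : x ^ q ≤ c ^ q := Real.rpow_le_rpow_of_nonpos hcpos h hq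
    have h2 : A * x ^ q ≤ A * c ^ q := mul_le_mul_of_nonneg_left h1 hA.le
    have h3 : (0:ℝ) ≤ B * x ^ p := by positivity
    linarith

/-- On [1,∞), a power with exponent `0 ≤ q` is dominated by any positive multiple
of a power with larger exponent, up to an additive constant. -/
lemma aux_large (A B q r : ℝ) (hA : 0 < A) (hB : 0 < B) (hq : 0 ≤ q) (hqr : q < r) :
    ∃ K : ℝ, 0 ≤ K ∧ ∀ x : ℝ, 1 ≤ x → A * x ^ q ≤ B * x ^ r + K := by
  have hAB : 0 < A / B := div_pos hA hB
  set c : ℝ := max 1 ((A / B) ^ ((r - q)⁻¹)) with hc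
  have hcpos : 0 < c := lt_of_lt_of_le one_pos (le_max_left _ _)
  refine ⟨A * c ^ q, by positivity, fun x hx1 => ?_⟩
  have hx : 0 < x := lt_of_lt_of_le one_pos hx1
  rcases le_total x c with h | h
  · have h1 : x ^ q ≤ c ^ q := Real.rpow_le_rpow hx.le h hq
    have h2 : A * x ^ q ≤ A * c ^ q := mul_le_mul_of_nonneg_left h1 hA.le
    have h3 : (0:ℝ) ≤ B * x ^ r := by positivity
    linarith
  · have h1 : c ^ (r - q) ≤ x ^ (r - q) :=
      Real.rpow_le_rpow hcpos.le h (by linarith)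
    have h2 : A / B ≤ c ^ (r - q) := by
      calc A / B = ((A / B) ^ ((r - q)⁻¹)) ^ (r - q) := by
            rw [← Real.rpow_mul hAB.le, inv_mul_cancel₀ (by linarith : r - q ≠ 0),
              Real.rpow_one]
        _ ≤ c ^ (r - q) :=
            Real.rpow_le_rpow (Real.rpow_pos_of_pos hAB _).le (le_max_right _ _)
              (by linarith)
    have h3 : A ≤ B * x ^ (r - q) := by
      have := h2.trans h1
      rw [div_le_iff₀ hB] at this
      linarith [this]
    have h4 : x ^ r = x ^ (r - q) * x ^ q := by
      rw [← Real.rpow_add hx]; ring_nf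
    have h5 : (0:ℝ) ≤ x ^ q := (Real.rpow_pos_of_pos hx q).le
    calc A * x ^ q ≤ (B * x ^ (r - q)) * x ^ q := mul_le_mul_of_nonneg_right h3 h5
      _ = B * x ^ r := by rw [h4]; ring
      _ ≤ B * x ^ r + A * c ^ q := le_add_of_nonneg_right (by positivity)

theorem V_bounded_above
    (αm1 α0 α1 α2 α3 σ lam ρ θ β : ℝ)
    (hαm1 : 0 < αm1) (hα0 : 0 < α0) (hα1 : 0 < α1) (hα2 : 0 < α2) (hα3 : 0 < α3)
    (hσ : 0 < σ) (hlam : 0 < lam) (hρ : 1 < ρ) (hθ : 1 < θ)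
    (hstruct : 1 + ρ > 2 * θ) (hβ0 : 0 < β) (hβ1 : β < 1) :
    ∃ K : ℝ, ∀ x : ℝ, 0 < x →
      αm1 * β * x ^ (β - 2) - α0 * β * x ^ (β - 1) + α1 * β * x ^ β
        - α2 * β * x ^ (ρ + β - 1) - αm1 * β * x ^ (-2 : ℝ) + α0 * β * x ^ (-1 : ℝ)
        - α1 * β + α2 * β * x ^ (ρ - 1)
        + (σ ^ 2 / 2) * β * (β - 1) * x ^ (β + 2 * θ - 2)
        + (σ ^ 2 / 2) * β * x ^ (2 * θ - 2)
        + lam * ((1 + α3) ^ β - 1) * x ^ β ≤ K := by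
  -- positivity of the jump coefficient
  have hA6 : 0 < lam * ((1 + α3) ^ β - 1) := by
    have h1 : (1:ℝ) < (1 + α3) ^ β :=
      (Real.one_lt_rpow_iff_of_pos (by linarith)).mpr (Or.inl ⟨by linarith, hβ0⟩)
    have : 0 < (1 + α3) ^ β - 1 := by linarith
    positivity
  obtain ⟨K1, hK1, hb1⟩ := aux_small (αm1 * β) (αm1 * β / 2) (-2) (β - 2)
    (by positivity) (by positivity) (by linarith) (by linarith)
  obtain ⟨K2, hK2, hb2⟩ := aux_small (α0 * β) (αm1 * β / 2) (-2) (-1)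
    (by positivity) (by positivity) (by norm_num) (by norm_num)
  obtain ⟨K3, hK3, hb3⟩ := aux_large (α1 * β) (α2 * β / 4) β (ρ + β - 1)
    (by positivity) (by positivity) hβ0.le (by linarith)
  obtain ⟨K4, hK4, hb4⟩ := aux_large (α2 * β) (α2 * β / 4) (ρ - 1) (ρ + β - 1)
    (by positivity) (by positivity) (by linarith) (by linarith)
  obtain ⟨K5, hK5, hb5⟩ := aux_large (σ ^ 2 / 2 * β) (α2 * β / 4) (2 * θ - 2) (ρ + β - 1)
    (by positivity) (by positivity) (by linarith) (by linarith)
  obtain ⟨K6, hK6, hb6⟩ := aux_large (lam * ((1 + α3) ^ β - 1)) (α2 * β / 4) β (ρ + β - 1)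
    hA6 (by positivity) hβ0.le (by linarith)
  refine ⟨(K1 + K2 + α1 * β + α2 * β + σ ^ 2 / 2 * β + lam * ((1 + α3) ^ β - 1))
    + (αm1 * β + α0 * β + K3 + K4 + K5 + K6), fun x hx => ?_⟩
  have hσterm : (σ ^ 2 / 2) * β * (β - 1) * x ^ (β + 2 * θ - 2) ≤ 0 := by
    have hp : (0:ℝ) ≤ x ^ (β + 2 * θ - 2) := (Real.rpow_pos_of_pos hx _).le
    have hc : (0:ℝ) ≤ σ ^ 2 / 2 * β * (1 - β) :=
      mul_nonneg (mul_nonneg (by positivity) hβ0.le) (by linarith)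
    have := mul_nonneg hc hp
    nlinarith [this]
  rcases le_total x 1 with hx1 | hx1
  · -- x ≤ 1
    have h1 := hb1 x hx hx1
    have h2 := hb2 x hx hx1
    have e3 : x ^ β ≤ 1 := Real.rpow_le_one hx.le hx1 hβ0.le
    have e4 : x ^ (ρ - 1) ≤ 1 := Real.rpow_le_one hx.le hx1 (by linarith)
    have e5 : x ^ (2 * θ - 2) ≤ 1 := Real.rpow_le_one hx.le hx1 (by linarith)
    have h3 : α1 * β * x ^ β ≤ α1 * β :=
      mul_le_of_le_one_right (by positivity) e3
    have h4 : α2 * β * x ^ (ρ - 1) ≤ α2 * β :=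
      mul_le_of_le_one_right (by positivity) e4
    have h5 : σ ^ 2 / 2 * β * x ^ (2 * θ - 2) ≤ σ ^ 2 / 2 * β :=
      mul_le_of_le_one_right (by positivity) e5
    have h6 : lam * ((1 + α3) ^ β - 1) * x ^ β ≤ lam * ((1 + α3) ^ β - 1) :=
      mul_le_of_le_one_right hA6.le e3
    have n1 : (0:ℝ) ≤ α0 * β * x ^ (β - 1) :=
      mul_nonneg (by positivity) (Real.rpow_pos_of_pos hx _).le
    have n2 : (0:ℝ) ≤ α2 * β * x ^ (ρ + β - 1) :=
      mul_nonneg (by positivity) (Real.rpow_pos_of_pos hx _).le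
    linarith [hK3, hK4, hK5, hK6, mul_pos hαm1 hβ0, mul_pos hα0 hβ0, mul_pos hα1 hβ0]
  · -- 1 ≤ x
    have h3 := hb3 x hx1
    have h4 := hb4 x hx1
    have h5 := hb5 x hx1
    have h6 := hb6 x hx1
    have e1 : x ^ (β - 2) ≤ 1 :=
      Real.rpow_le_one_of_one_le_of_nonpos hx1 (by linarith)
    have e2 : x ^ (-1 : ℝ) ≤ 1 :=
      Real.rpow_le_one_of_one_le_of_nonpos hx1 (by norm_num)
    have h1 : αm1 * β * x ^ (β - 2) ≤ αm1 * β :=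
      mul_le_of_le_one_right (by positivity) e1
    have h2 : α0 * β * x ^ (-1 : ℝ) ≤ α0 * β :=
      mul_le_of_le_one_right (by positivity) e2
    have n1 : (0:ℝ) ≤ α0 * β * x ^ (β - 1) :=
      mul_nonneg (by positivity) (Real.rpow_pos_of_pos hx _).le
    have n2 : (0:ℝ) ≤ αm1 * β * x ^ (-2 : ℝ) :=
      mul_nonneg (by positivity) (Real.rpow_pos_of_pos hx _).le
    linarith [hK1, hK2, hA6.le, mul_pos hα1 hβ0, mul_pos hα2 hβ0,
      mul_pos (by positivity : (0:ℝ) < σ ^ 2 / 2) hβ0]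
end

section
/- Let f(x) = α₋₁ x^{−1} − α₀ + α₁ x − α₂ x^ρ and g(x) = x^θ with α₋₁, α₀, α₁, α₂ > 0, ρ, θ > 1 satisfying 1 + ρ > 2θ. Let φ : ℝ₊ → ℝ₊ be any function with φ(y) ≤ σ for all y > 0. Then for every p ≥ 2 there exists a constant K₄ > 0 such that x f(x) + ((p−1)/2)|φ(y) g(x)|² ≤ K₄(1 + x²) for all x, y > 0. -/
theorem khasminskii_condition
    (αm1 α0 α1 α2 σ ρ θ : ℝ)
    (hαm1 : 0 < αm1) (hα0 : 0 < α0) (hα1 : 0 < α1) (hα2 : 0 < α2) (hσ : 0 < σ)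
    (hρ : 1 < ρ) (hθ : 1 < θ) (hstruct : 1 + ρ > 2 * θ)
    (φ : ℝ → ℝ) (hφpos : ∀ y : ℝ, 0 < y → 0 < φ y) (hφ : ∀ y : ℝ, 0 < y → φ y ≤ σ) :
    ∀ p : ℝ, 2 ≤ p → ∃ K₄ : ℝ, 0 < K₄ ∧
      ∀ x y : ℝ, 0 < x → 0 < y →
        x * (αm1 * x ^ (-1 : ℝ) - α0 + α1 * x - α2 * x ^ ρ)
          + ((p - 1) / 2) * |φ y * x ^ θ| ^ 2 ≤ K₄ * (1 + x ^ 2) := by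
  intro p hp
  set A := (p - 1) / 2 * σ ^ 2 with hAdef
  clear_value A
  have hA : 0 < A := hAdef ▸ mul_pos (div_pos (by linarith) two_pos) (by positivity)
  have he : 0 < 1 + ρ - 2 * θ := by linarith
  set M := max 1 ((A / α2) ^ ((1 : ℝ) / (1 + ρ - 2 * θ))) with hMdef
  have hM1 : (1 : ℝ) ≤ M := le_max_left _ _
  clear_value M
  have hM0 : 0 < M := lt_of_lt_of_le one_pos hM1
  have hMpow : 0 < M ^ (2 * θ) := Real.rpow_pos_of_pos hM0 _
  refine ⟨αm1 + α1 + A * M ^ (2 * θ) + 1, by positivity, ?_⟩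
  intro x y hx hy
  have h1 : x * x ^ (-1 : ℝ) = 1 := by
    nth_rewrite 1 [← Real.rpow_one x]
    rw [← Real.rpow_add hx]; norm_num
  have h2 : x * x ^ ρ = x ^ (1 + ρ) := by
    rw [Real.rpow_add hx, Real.rpow_one]
  have hexp : x * (αm1 * x ^ (-1 : ℝ) - α0 + α1 * x - α2 * x ^ ρ)
      = αm1 - α0 * x + α1 * x ^ 2 - α2 * x ^ (1 + ρ) := by
    linear_combination αm1 * h1 - α2 * h2
  have hxθ : (0 : ℝ) < x ^ θ := Real.rpow_pos_of_pos hx _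
  have hsq : (x ^ θ) ^ 2 = x ^ (2 * θ) := by
    rw [sq, ← Real.rpow_add hx]; ring_nf
  have habs : |φ y * x ^ θ| ^ 2 ≤ σ ^ 2 * x ^ (2 * θ) := by
    rw [sq_abs, mul_pow, hsq]
    have hφy := hφpos y hy
    have : (φ y) ^ 2 ≤ σ ^ 2 := by nlinarith [hφ y hy]
    nlinarith [Real.rpow_pos_of_pos hx (2 * θ)]
  have h3 : (p - 1) / 2 * |φ y * x ^ θ| ^ 2 ≤ A * x ^ (2 * θ) := by
    rw [hAdef, mul_assoc]
    exact mul_le_mul_of_nonneg_left habs (by linarith)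
  have key : A * x ^ (2 * θ) - α2 * x ^ (1 + ρ) ≤ A * M ^ (2 * θ) := by
    rcases le_total x M with h | h
    · have hle : x ^ (2 * θ) ≤ M ^ (2 * θ) := Real.rpow_le_rpow hx.le h (by linarith)
      nlinarith [Real.rpow_pos_of_pos hx (1 + ρ),
        mul_le_mul_of_nonneg_left hle hA.le]
    · have h2'' : (A / α2) ^ ((1 : ℝ) / (1 + ρ - 2 * θ)) ≤ M := by
        rw [hMdef]; exact le_max_right _ _
      have h2' : (A / α2) ^ ((1 : ℝ) / (1 + ρ - 2 * θ)) ≤ x := le_trans h2'' h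
      have hxe : A / α2 ≤ x ^ (1 + ρ - 2 * θ) := by
        calc A / α2 = ((A / α2) ^ ((1 : ℝ) / (1 + ρ - 2 * θ))) ^ (1 + ρ - 2 * θ) := by
              rw [← Real.rpow_mul (by positivity), one_div_mul_cancel (ne_of_gt he),
                Real.rpow_one]
          _ ≤ x ^ (1 + ρ - 2 * θ) := Real.rpow_le_rpow (by positivity) h2' he.le
      have hA2 : A ≤ α2 * x ^ (1 + ρ - 2 * θ) := (div_le_iff₀' hα2).mp hxe
      have hmul : x ^ (1 + ρ - 2 * θ) * x ^ (2 * θ) = x ^ (1 + ρ) := by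
        rw [← Real.rpow_add hx]; ring_nf
      have hAx : A * x ^ (2 * θ) ≤ α2 * x ^ (1 + ρ) := by
        calc A * x ^ (2 * θ) ≤ α2 * x ^ (1 + ρ - 2 * θ) * x ^ (2 * θ) :=
              mul_le_mul_of_nonneg_right hA2 (Real.rpow_pos_of_pos hx (2 * θ)).le
          _ = α2 * x ^ (1 + ρ) := by rw [mul_assoc, hmul]
      linarith [hAx, mul_pos hA hMpow]
  rw [hexp]
  linarith [key, h3, mul_pos hα0 hx, sq_nonneg x,
    mul_nonneg hαm1.le (sq_nonneg x),
    mul_nonneg (mul_pos hA hMpow).le (sq_nonneg x),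
    mul_pos hA hMpow]
end

section
/- Let f(x) = α₋₁ x^{−1} − α₀ + α₁ x − α₂ x^ρ and g(x) = x^θ with α₋₁, α₀, α₁, α₂ > 0, ρ, θ > 1, 1 + ρ > 2θ, and let φ be bounded by σ > 0. Let f_Δ, g_Δ be the truncated versions of f, g (truncating the argument to the interval [1/μ⁻¹(π(Δ)), μ⁻¹(π(Δ))] with μ⁻¹(π(Δ)) > 1). Then for every p ≥ 2 there exists a constant K₅, independent of Δ, such that x f_Δ(x) + ((p−1)/2)|φ(y) g_Δ(x)|² ≤ K₅(1 + x²) for all x ∈ ℝ and y > 0. -/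
lemma aux_rpow_dom (A B s t : ℝ) (hA : 0 < A) (hB : 0 < B) (hs : 0 ≤ s) (hst : s < t) :
    ∃ C : ℝ, 0 ≤ C ∧ ∀ m : ℝ, 0 ≤ m → A * m ^ s ≤ B * m ^ t + C := by
  set δ := t - s with hδdef
  have hδ : 0 < δ := by simp only [hδdef]; linarith
  set M := max 1 ((A / B) ^ (1 / δ)) with hMdef
  have hM1 : (1 : ℝ) ≤ M := le_max_left _ _
  have hM0 : (0:ℝ) ≤ M := by linarith
  have hABnn : 0 ≤ A / B := le_of_lt (div_pos hA hB)
  have hMδ : A / B ≤ M ^ δ := by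
    have h1 : ((A / B) ^ (1 / δ)) ^ δ = A / B := by
      rw [← Real.rpow_mul hABnn, one_div_mul_cancel hδ.ne', Real.rpow_one]
    calc A / B = ((A / B) ^ (1 / δ)) ^ δ := h1.symm
      _ ≤ M ^ δ := Real.rpow_le_rpow (Real.rpow_nonneg hABnn _) (le_max_right _ _) hδ.le
  have hCnn : 0 ≤ A * M ^ s := by positivity
  refine ⟨A * M ^ s, hCnn, fun m hm => ?_⟩
  rcases le_or_gt m M with h | h
  · have h1 : m ^ s ≤ M ^ s := Real.rpow_le_rpow hm h hs
    have h2 : A * m ^ s ≤ A * M ^ s := by nlinarith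
    have h3 : 0 ≤ B * m ^ t := by positivity
    linarith
  · have hmpos : 0 < m := lt_of_le_of_lt (by linarith) h
    have hmδ : A ≤ B * m ^ δ := by
      have h1 : M ^ δ ≤ m ^ δ := Real.rpow_le_rpow hM0 h.le hδ.le
      have hAB : A / B ≤ m ^ δ := le_trans hMδ h1
      rw [div_le_iff₀ hB] at hAB; linarith
    have hsplit : m ^ t = m ^ s * m ^ δ := by
      rw [← Real.rpow_add hmpos, hδdef]; ring_nf
    have hms : 0 ≤ m ^ s := Real.rpow_nonneg hm _
    calc A * m ^ s ≤ (B * m ^ δ) * m ^ s := mul_le_mul_of_nonneg_right hmδ hms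
      _ = B * m ^ t := by rw [hsplit]; ring
      _ ≤ B * m ^ t + A * M ^ s := by linarith

set_option maxHeartbeats 1000000 in
/-- Khasminskii-type condition preserved by truncation, with constant independent of Δ
(equivalently, independent of the truncation level N = μ⁻¹(π(Δ)) > 1). -/
theorem truncated_khasminskii
    (αm1 α0 α1 α2 σ ρ θ : ℝ)
    (hαm1 : 0 < αm1) (hα0 : 0 < α0) (hα1 : 0 < α1) (hα2 : 0 < α2) (hσ : 0 < σ)
    (hρ : 1 < ρ) (hθ : 1 < θ) (hstruct : 1 + ρ > 2 * θ)
    (φ : ℝ → ℝ) (hφpos : ∀ y : ℝ, 0 < y → 0 < φ y) (hφ : ∀ y : ℝ, 0 < y → φ y ≤ σ) :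
    ∀ p : ℝ, 2 ≤ p → ∃ K₅ : ℝ, 0 < K₅ ∧
      ∀ N : ℝ, 1 < N → ∀ x y : ℝ, 0 < y →
        (let f : ℝ → ℝ := fun z => αm1 * z ^ (-1 : ℝ) - α0 + α1 * z - α2 * z ^ ρ
         let fΔ : ℝ → ℝ := fun z => f (max (1 / N) (min z N))
         let gΔ : ℝ → ℝ := fun z => if 0 ≤ z then (min z N) ^ θ else 0
         x * fΔ x + ((p - 1) / 2) * |φ y * gΔ x| ^ 2) ≤ K₅ * (1 + x ^ 2) := by
  intro p hp
  have hApos : 0 < (p - 1) / 2 * σ ^ 2 := mul_pos (by linarith) (by positivity)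
  obtain ⟨Ca, hCa0, hCa⟩ := aux_rpow_dom ((p - 1) / 2 * σ ^ 2) α2 (2 * θ) (1 + ρ)
    hApos hα2 (by linarith) (by linarith)
  refine ⟨2 * αm1 + α0 + α1 + α2 + Ca + 1, by positivity, ?_⟩
  intro N hN x y hy
  dsimp only
  have hN0 : (0:ℝ) < N := by linarith
  have hNinv : (0:ℝ) < 1 / N := by positivity
  have hNinv1 : 1 / N ≤ 1 := by rw [div_le_one hN0]; linarith
  rcases le_or_gt 0 x with hx | hx
  · -- x ≥ 0
    rw [if_pos hx]
    set m := min x N with hmdef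
    set c := max (1 / N) m with hcdef
    have hm0 : 0 ≤ m := le_min hx hN0.le
    have hmx : m ≤ x := min_le_left _ _
    have hmc : m ≤ c := le_max_right _ _
    have hc0 : 0 < c := lt_of_lt_of_le hNinv (le_max_left _ _)
    rw [Real.rpow_neg_one]
    -- Step A
    have hA : x * c⁻¹ ≤ 1 + x := by
      rcases le_or_gt x c with h | h
      · have : x * c⁻¹ ≤ c * c⁻¹ := mul_le_mul_of_nonneg_right h (inv_nonneg.mpr hc0.le)
        rw [mul_inv_cancel₀ hc0.ne'] at this
        linarith
      · have hcN : c = N := by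
          by_cases hxN : x ≤ N
          · exfalso
            have : m = x := min_eq_left hxN
            rw [this] at hmc; linarith
          · have hm : m = N := min_eq_right (le_of_not_ge hxN)
            rw [hcdef, hm]
            exact max_eq_right (by linarith)
        have hNinv' : N⁻¹ ≤ 1 := by
          rw [inv_le_one_iff₀]; right; linarith
        have : x * N⁻¹ ≤ x * 1 := mul_le_mul_of_nonneg_left hNinv' hx
        rw [hcN]; linarith
    -- Step B
    have hB : x * c ≤ 1 + x ^ 2 := by
      rcases le_or_gt c x with h | h
      · nlinarith
      · have hc1 : c = 1 / N := by
          rcases max_choice (1 / N) m with h1 | h1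
          · exact h1
          · exfalso; rw [← hcdef] at h1; rw [h1] at h; linarith [lt_of_le_of_lt hmx h]
        have hcle1 : c ≤ 1 := by rw [hc1]; exact hNinv1
        nlinarith
    -- Step C: g-term
    have hφy := hφpos y hy
    have hφle := hφ y hy
    have hmθ : 0 ≤ m ^ θ := Real.rpow_nonneg hm0 _
    have hsq : |φ y * m ^ θ| ^ 2 = (φ y) ^ 2 * (m ^ θ) ^ 2 := by
      rw [sq_abs, mul_pow]
    have hφsq : (φ y) ^ 2 ≤ σ ^ 2 := by nlinarith
    have h2θ : (m ^ θ) ^ 2 = m ^ (2 * θ) := by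
      rw [mul_comm 2 θ, Real.rpow_mul hm0]
      norm_num
    have hDm : m ^ (1 + ρ) ≤ x * c ^ ρ := by
      rcases eq_or_lt_of_le hm0 with h0 | h0
      · rw [← h0, Real.zero_rpow (by linarith : (1:ℝ) + ρ ≠ 0)]
        positivity
      · rw [Real.rpow_add h0, Real.rpow_one]
        have h1 : m ^ ρ ≤ c ^ ρ := Real.rpow_le_rpow hm0 hmc (by linarith)
        have h2 : 0 ≤ m ^ ρ := Real.rpow_nonneg hm0 _
        exact mul_le_mul hmx h1 h2 hx
    have hT : ((p - 1) / 2) * |φ y * m ^ θ| ^ 2 ≤ α2 * (x * c ^ ρ) + Ca := by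
      have h1 : ((p - 1) / 2) * |φ y * m ^ θ| ^ 2 ≤ ((p - 1) / 2 * σ ^ 2) * m ^ (2 * θ) := by
        rw [hsq, ← h2θ]
        have hp2 : (0:ℝ) ≤ (p - 1) / 2 := by linarith
        calc ((p - 1) / 2) * ((φ y) ^ 2 * (m ^ θ) ^ 2)
            ≤ ((p - 1) / 2) * (σ ^ 2 * (m ^ θ) ^ 2) :=
              mul_le_mul_of_nonneg_left
                (mul_le_mul_of_nonneg_right hφsq (sq_nonneg _)) hp2
          _ = ((p - 1) / 2 * σ ^ 2) * (m ^ θ) ^ 2 := by ring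
      have h2 := hCa m hm0
      have h3 : α2 * m ^ (1 + ρ) ≤ α2 * (x * c ^ ρ) := mul_le_mul_of_nonneg_left hDm hα2.le
      linarith
    -- combine
    have hxle : x ≤ 1 + x ^ 2 := by linarith [sq_nonneg (x - 1), hx]
    have hαm1A : αm1 * (x * c⁻¹) ≤ αm1 * (1 + x) := mul_le_mul_of_nonneg_left hA hαm1.le
    have hα1B : α1 * (x * c) ≤ α1 * (1 + x ^ 2) := mul_le_mul_of_nonneg_left hB hα1.le
    have hα0x : 0 ≤ α0 * x := mul_nonneg hα0.le hx
    have hring : x * (αm1 * c⁻¹ - α0 + α1 * c - α2 * c ^ ρ)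
        = αm1 * (x * c⁻¹) - α0 * x + α1 * (x * c) - α2 * (x * c ^ ρ) := by ring
    rw [hring]
    have hq : (0:ℝ) ≤ 1 - x + x ^ 2 := by linarith [sq_nonneg (x - 1), hx]
    have hconst : αm1 * (1 + x) + α1 * (1 + x ^ 2) + Ca
        ≤ (2 * αm1 + α0 + α1 + α2 + Ca + 1) * (1 + x ^ 2) := by
      have e1 := mul_nonneg hαm1.le hq
      have e2 := mul_nonneg hCa0 (sq_nonneg x)
      have e3 := mul_nonneg hα0.le (sq_nonneg x)
      have e4 := mul_nonneg hα2.le (sq_nonneg x)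
      have e5 := sq_nonneg x
      nlinarith [e1, e2, e3, e4, e5]
    linarith [hαm1A, hα1B, hα0x, hT, hconst]
  · -- x < 0
    rw [if_neg (not_le.mpr hx)]
    have hmin : min x N = x := min_eq_left (by linarith)
    have hmax : max (1 / N) x = 1 / N := max_eq_left (by linarith)
    rw [hmin, hmax]
    have hinv : (1 / N) ^ (-1 : ℝ) = N := by rw [Real.rpow_neg_one]; simp
    rw [hinv]
    have hrle : (1 / N) ^ ρ ≤ 1 := Real.rpow_le_one hNinv.le hNinv1 (by linarith)
    have hF : -(α0 + α2) ≤ αm1 * N - α0 + α1 * (1 / N) - α2 * (1 / N) ^ ρ := by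
      have h1 : 0 ≤ αm1 * N := by positivity
      have h2 : 0 ≤ α1 * (1 / N) := by positivity
      have h3 : α2 * (1 / N) ^ ρ ≤ α2 * 1 := mul_le_mul_of_nonneg_left hrle hα2.le
      linarith
    have hxF := mul_le_mul_of_nonpos_left hF hx.le
    have hnx : -x ≤ 1 + x ^ 2 := by linarith [sq_nonneg (x + 1)]
    have habs : |φ y * (0:ℝ)| ^ 2 = 0 := by simp
    rw [habs, mul_zero, add_zero]
    have h4 : x * -(α0 + α2) ≤ (α0 + α2) * (1 + x ^ 2) := by
      calc x * -(α0 + α2) = (α0 + α2) * (-x) := by ring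
        _ ≤ (α0 + α2) * (1 + x ^ 2) := mul_le_mul_of_nonneg_left hnx (by positivity)
    have h5 : (0:ℝ) ≤ (2 * αm1 + α1 + Ca + 1) * (1 + x ^ 2) := by positivity
    linarith [hxF, h4, h5]
end
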